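/- Let A, B, X ∈ B(H). Then ω(A*XB + B*XA) ≤ ((1/2)·(‖A‖² + ‖B‖²) + ‖AB*‖)·ω(X). -/

import Mathlib

open scoped InnerProductSpace

variable {H : Type*} [NormedAddCommGroup H] [InnerProductSpace ℂ H] [CompleteSpace H]

/-- The absolute value `|T| = (T*T)^(1/2)` of a bounded operator. -/
noncomputable def absOp (T : H →L[ℂ] H) : H →L[ℂ] H := CFC.sqrt (star T * T)

/-- The numerical radius `ω(T) = sup {|⟨Tx, x⟩| : ‖x‖ = 1}`. -/
noncomputable def numRad (T : H →L[ℂ] H) : ℝ :=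
  sSup {r : ℝ | ∃ x : H, ‖x‖ = 1 ∧ r = ‖(inner ℂ (T x) x : ℂ)‖}

lemma numRad_bddAbove (T : H →L[ℂ] H) :
    BddAbove {r : ℝ | ∃ x : H, ‖x‖ = 1 ∧ r = ‖(inner ℂ (T x) x : ℂ)‖} := by
  refine ⟨‖T‖, ?_⟩
  rintro r ⟨x, hx, rfl⟩
  calc ‖(inner ℂ (T x) x : ℂ)‖ ≤ ‖T x‖ * ‖x‖ := norm_inner_le_norm _ _
    _ ≤ (‖T‖ * ‖x‖) * ‖x‖ := by gcongr; exact T.le_opNorm x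
    _ = ‖T‖ := by rw [hx]; ring

lemma numRad_nonneg (T : H →L[ℂ] H) : 0 ≤ numRad T := by
  apply Real.sSup_nonneg
  rintro r ⟨x, hx, rfl⟩; positivity

lemma inner_le_numRad (T : H →L[ℂ] H) (w : H) :
    ‖(inner ℂ (T w) w : ℂ)‖ ≤ numRad T * ‖w‖ ^ 2 := by
  rcases eq_or_ne w 0 with rfl | hw
  · simp
  · have hn : (0:ℝ) < ‖w‖ := norm_pos_iff.2 hw
    set x : H := ((‖w‖⁻¹ : ℝ) : ℂ) • w with hxdef
    have hx : ‖x‖ = 1 := by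
      simp [hxdef, norm_smul, abs_of_pos (inv_pos.2 hn), inv_mul_cancel₀ hn.ne']
    have hmem : ‖(inner ℂ (T x) x : ℂ)‖ ∈
        {r : ℝ | ∃ y : H, ‖y‖ = 1 ∧ r = ‖(inner ℂ (T y) y : ℂ)‖} := ⟨x, hx, rfl⟩
    have hle := le_csSup (numRad_bddAbove T) hmem
    have hval : ‖(inner ℂ (T x) x : ℂ)‖ = ‖w‖⁻¹ * ‖w‖⁻¹ * ‖(inner ℂ (T w) w : ℂ)‖ := by
      simp [hxdef, inner_smul_left, inner_smul_right, map_smul, Complex.conj_ofReal,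
        norm_mul, abs_of_pos (inv_pos.2 hn)]
      ring
    rw [hval] at hle
    have h2 := mul_le_mul_of_nonneg_right hle (by positivity : (0:ℝ) ≤ ‖w‖^2)
    have hne : ‖w‖ ≠ 0 := hn.ne'
    have h3 : ‖w‖⁻¹ * ‖w‖⁻¹ * ‖(inner ℂ (T w) w : ℂ)‖ * ‖w‖^2 = ‖(inner ℂ (T w) w : ℂ)‖ := by
      rw [pow_two]
      field_simp
    rw [h3] at h2
    exact h2

lemma two_point (X : H →L[ℂ] H) (u v : H) :
    ‖(inner ℂ (X u) v : ℂ) + (inner ℂ (X v) u : ℂ)‖ ≤ numRad X * (‖u‖ ^ 2 + ‖v‖ ^ 2) := by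
  have key : (inner ℂ (X u) v : ℂ) + (inner ℂ (X v) u : ℂ)
      = (1/2 : ℂ) * ((inner ℂ (X (u + v)) (u + v) : ℂ) - (inner ℂ (X (u - v)) (u - v) : ℂ)) := by
    simp only [map_add, map_sub, inner_add_left, inner_add_right, inner_sub_left,
      inner_sub_right]
    ring
  rw [key]
  have h1 := inner_le_numRad X (u + v)
  have h2 := inner_le_numRad X (u - v)
  have hpar : ‖u + v‖ ^ 2 + ‖u - v‖ ^ 2 = 2 * (‖u‖ ^ 2 + ‖v‖ ^ 2) := by
    have := parallelogram_law_with_norm ℂ u v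
    nlinarith [this]
  calc ‖(1/2 : ℂ) * ((inner ℂ (X (u + v)) (u + v) : ℂ) - (inner ℂ (X (u - v)) (u - v) : ℂ))‖
      = (1/2) * ‖(inner ℂ (X (u + v)) (u + v) : ℂ) - (inner ℂ (X (u - v)) (u - v) : ℂ)‖ := by
        rw [norm_mul]; norm_num
    _ ≤ (1/2) * (‖(inner ℂ (X (u + v)) (u + v) : ℂ)‖ + ‖(inner ℂ (X (u - v)) (u - v) : ℂ)‖) := by
        gcongr; exact norm_sub_le _ _
    _ ≤ (1/2) * (numRad X * ‖u + v‖ ^ 2 + numRad X * ‖u - v‖ ^ 2) := by gcongr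
    _ = (1/2) * (numRad X * (‖u + v‖ ^ 2 + ‖u - v‖ ^ 2)) := by ring
    _ = numRad X * (‖u‖ ^ 2 + ‖v‖ ^ 2) := by rw [hpar]; ring

lemma two_point' (X : H →L[ℂ] H) (u v : H) :
    ‖(inner ℂ (X u) v : ℂ) + (inner ℂ (X v) u : ℂ)‖ ≤ 2 * numRad X * (‖u‖ * ‖v‖) := by
  rcases eq_or_ne u 0 with rfl | hu
  · simp
  rcases eq_or_ne v 0 with rfl | hv
  · simp
  have hun : (0:ℝ) < ‖u‖ := norm_pos_iff.2 hu
  have hvn : (0:ℝ) < ‖v‖ := norm_pos_iff.2 hv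
  set s : ℝ := Real.sqrt (‖v‖ / ‖u‖) with hs
  have hspos : 0 < s := Real.sqrt_pos.2 (by positivity)
  have hs2 : s ^ 2 = ‖v‖ / ‖u‖ := Real.sq_sqrt (by positivity)
  set u' : H := ((s : ℂ)) • u with hu'
  set v' : H := ((s⁻¹ : ℝ) : ℂ) • v with hv'
  have hinv : (inner ℂ (X u') v' : ℂ) + (inner ℂ (X v') u' : ℂ)
      = (inner ℂ (X u) v : ℂ) + (inner ℂ (X v) u : ℂ) := by
    simp only [hu', hv', map_smul, inner_smul_left, inner_smul_right, Complex.conj_ofReal]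
    rw [show ((s⁻¹ : ℝ) : ℂ) = (s : ℂ)⁻¹ by push_cast; ring]
    have hsne : (s : ℂ) ≠ 0 := by exact_mod_cast hspos.ne'
    field_simp
  have hb := two_point X u' v'
  rw [hinv] at hb
  have hnu' : ‖u'‖ = s * ‖u‖ := by
    rw [hu', norm_smul, Complex.norm_real, Real.norm_eq_abs, abs_of_pos hspos]
  have hnv' : ‖v'‖ = s⁻¹ * ‖v‖ := by
    rw [hv', norm_smul, Complex.norm_real, Real.norm_eq_abs, abs_of_pos (inv_pos.2 hspos)]
  have harith : ‖u'‖ ^ 2 + ‖v'‖ ^ 2 = 2 * (‖u‖ * ‖v‖) := by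
    rw [hnu', hnv', mul_pow, mul_pow, hs2]
    rw [inv_pow, hs2]
    field_simp
    ring
  rw [harith] at hb
  calc ‖(inner ℂ (X u) v : ℂ) + (inner ℂ (X v) u : ℂ)‖ ≤ numRad X * (2 * (‖u‖ * ‖v‖)) := hb
    _ = 2 * numRad X * (‖u‖ * ‖v‖) := by ring

lemma buzano (x u w : H) (hx : ‖x‖ = 1) :
    ‖(inner ℂ u x : ℂ) * (inner ℂ x w : ℂ)‖ ≤ (‖u‖ * ‖w‖ + ‖(inner ℂ u w : ℂ)‖) / 2 := by
  set a : ℂ := (inner ℂ x u : ℂ) with ha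
  set u' : H := ((2 : ℂ) * a) • x - u with hu'
  have claim1 : (inner ℂ u' w : ℂ) = 2 * (inner ℂ u x : ℂ) * (inner ℂ x w : ℂ) - (inner ℂ u w : ℂ) := by
    rw [hu', inner_sub_left, inner_smul_left]
    simp only [map_mul, map_ofNat, ha, inner_conj_symm]
  have claim2 : ‖u'‖ = ‖u‖ := by
    have hre : RCLike.re (inner ℂ (((2 : ℂ) * a) • x) u : ℂ) = 2 * Complex.normSq a := by
      rw [inner_smul_left, ← ha]
      simp only [map_mul, map_ofNat, RCLike.re_to_complex, Complex.normSq_apply,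
        Complex.mul_re, Complex.mul_im, Complex.conj_re, Complex.conj_im, Complex.re_ofNat,
        Complex.im_ofNat]
      ring
    have hns : ‖((2 : ℂ) * a) • x‖ ^ 2 = 4 * Complex.normSq a := by
      rw [norm_smul, hx, mul_one, norm_mul, mul_pow]
      rw [show ‖(2:ℂ)‖ = 2 by simp, Complex.sq_norm]
      ring
    have h1 : ‖u'‖ ^ 2 = ‖u‖ ^ 2 := by
      rw [hu', @norm_sub_sq ℂ, hre, hns]
      ring
    calc ‖u'‖ = Real.sqrt (‖u'‖ ^ 2) := (Real.sqrt_sq (norm_nonneg _)).symm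
      _ = Real.sqrt (‖u‖ ^ 2) := by rw [h1]
      _ = ‖u‖ := Real.sqrt_sq (norm_nonneg _)
  have key : ‖2 * (inner ℂ u x : ℂ) * (inner ℂ x w : ℂ)‖
      ≤ ‖u‖ * ‖w‖ + ‖(inner ℂ u w : ℂ)‖ := by
    calc ‖2 * (inner ℂ u x : ℂ) * (inner ℂ x w : ℂ)‖
        ≤ ‖2 * (inner ℂ u x : ℂ) * (inner ℂ x w : ℂ) - (inner ℂ u w : ℂ)‖ + ‖(inner ℂ u w : ℂ)‖ := by
          have := norm_add_le (2 * (inner ℂ u x : ℂ) * (inner ℂ x w : ℂ) - (inner ℂ u w : ℂ))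
            ((inner ℂ u w : ℂ))
          simpa using this
      _ = ‖(inner ℂ u' w : ℂ)‖ + ‖(inner ℂ u w : ℂ)‖ := by rw [claim1]
      _ ≤ ‖u'‖ * ‖w‖ + ‖(inner ℂ u w : ℂ)‖ := by gcongr; exact norm_inner_le_norm _ _
      _ = ‖u‖ * ‖w‖ + ‖(inner ℂ u w : ℂ)‖ := by rw [claim2]
  have h2 : ‖2 * (inner ℂ u x : ℂ) * (inner ℂ x w : ℂ)‖
      = 2 * ‖(inner ℂ u x : ℂ) * (inner ℂ x w : ℂ)‖ := by
    rw [mul_assoc, norm_mul]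
    norm_num
  rw [h2] at key
  linarith

lemma key_norms (A B : H →L[ℂ] H) (x : H) (hx : ‖x‖ = 1) :
    2 * (‖A x‖ * ‖B x‖) ≤ ‖A‖ * ‖B‖ + ‖A * star B‖ := by
  rcases eq_or_ne (A x) 0 with hA0 | hA0
  · rw [hA0]; simp; positivity
  rcases eq_or_ne (B x) 0 with hB0 | hB0
  · rw [hB0]; simp; positivity
  have hAn : (0:ℝ) < ‖A x‖ := norm_pos_iff.2 hA0
  have hBn : (0:ℝ) < ‖B x‖ := norm_pos_iff.2 hB0
  set y : H := ((‖A x‖⁻¹ : ℝ) : ℂ) • (A x) with hy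
  set z : H := ((‖B x‖⁻¹ : ℝ) : ℂ) • (B x) with hz
  have hyn : ‖y‖ = 1 := by
    rw [hy, norm_smul, Complex.norm_real, Real.norm_eq_abs,
      abs_of_pos (inv_pos.2 hAn), inv_mul_cancel₀ hAn.ne']
  have hzn : ‖z‖ = 1 := by
    rw [hz, norm_smul, Complex.norm_real, Real.norm_eq_abs,
      abs_of_pos (inv_pos.2 hBn), inv_mul_cancel₀ hBn.ne']
  set u : H := (star A) y with hu
  set w : H := (star B) z with hw
  have h1 : (inner ℂ u x : ℂ) = (‖A x‖ : ℂ) := by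
    rw [hu, ContinuousLinearMap.star_eq_adjoint, ContinuousLinearMap.adjoint_inner_left, hy,
      inner_smul_left, Complex.conj_ofReal, inner_self_eq_norm_sq_to_K]
    norm_cast
    field_simp
    exact (Complex.ofReal_mul _ _).symm.trans (congrArg _ (show (1 / ‖A x‖) * ‖A x‖ ^ 2 = ‖A x‖ by
      rw [one_div, sq, ← mul_assoc, inv_mul_cancel₀ hAn.ne', one_mul]))
  have h2 : (inner ℂ x w : ℂ) = (‖B x‖ : ℂ) := by
    rw [hw, ContinuousLinearMap.star_eq_adjoint, ContinuousLinearMap.adjoint_inner_right, hz,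
      inner_smul_right, inner_self_eq_norm_sq_to_K]
    norm_cast
    field_simp
    exact (Complex.ofReal_mul _ _).symm.trans (congrArg _ (show (1 / ‖B x‖) * ‖B x‖ ^ 2 = ‖B x‖ by
      rw [one_div, sq, ← mul_assoc, inv_mul_cancel₀ hBn.ne', one_mul]))
  have hbz := buzano x u w hx
  rw [h1, h2] at hbz
  have hlhs : ‖(‖A x‖ : ℂ) * (‖B x‖ : ℂ)‖ = ‖A x‖ * ‖B x‖ := by
    rw [norm_mul, Complex.norm_real, Complex.norm_real, Real.norm_eq_abs, Real.norm_eq_abs,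
      abs_of_pos hAn, abs_of_pos hBn]
  rw [hlhs] at hbz
  have hun : ‖u‖ ≤ ‖A‖ := by
    calc ‖u‖ ≤ ‖star A‖ * ‖y‖ := (star A).le_opNorm y
      _ = ‖A‖ := by rw [hyn, norm_star, mul_one]
  have hwn : ‖w‖ ≤ ‖B‖ := by
    calc ‖w‖ ≤ ‖star B‖ * ‖z‖ := (star B).le_opNorm z
      _ = ‖B‖ := by rw [hzn, norm_star, mul_one]
  have hcross : ‖(inner ℂ u w : ℂ)‖ ≤ ‖A * star B‖ := by
    have : (inner ℂ u w : ℂ) = (inner ℂ y ((A * star B) z) : ℂ) := by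
      rw [hu, ContinuousLinearMap.star_eq_adjoint, ContinuousLinearMap.adjoint_inner_left]
      rfl
    rw [this]
    calc ‖(inner ℂ y ((A * star B) z) : ℂ)‖ ≤ ‖y‖ * ‖(A * star B) z‖ := norm_inner_le_norm _ _
      _ ≤ 1 * (‖A * star B‖ * ‖z‖) := by rw [hyn]; gcongr; exact (A * star B).le_opNorm z
      _ = ‖A * star B‖ := by rw [hzn]; ring
  have hmul := mul_le_mul hun hwn (norm_nonneg _) (norm_nonneg _)
  linarith

/-- Theorem 2.16: `ω(A*XB + B*XA) ≤ ((1/2)(‖A‖² + ‖B‖²) + ‖AB*‖) ω(X)`. -/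
theorem numRad_symmetrized_product (A B X : H →L[ℂ] H) :
    numRad (star A * X * B + star B * X * A)
      ≤ ((1 / 2) * (‖A‖ ^ 2 + ‖B‖ ^ 2) + ‖A * star B‖) * numRad X := by
  set K : ℝ := (1 / 2) * (‖A‖ ^ 2 + ‖B‖ ^ 2) + ‖A * star B‖ with hK
  have hK0 : 0 ≤ K := by positivity
  apply Real.sSup_le
  · rintro r ⟨x, hx, rfl⟩
    have hSx : (inner ℂ ((star A * X * B + star B * X * A) x) x : ℂ)
        = (inner ℂ (X (B x)) (A x) : ℂ) + (inner ℂ (X (A x)) (B x) : ℂ) := by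
      simp only [ContinuousLinearMap.add_apply, ContinuousLinearMap.mul_apply, inner_add_left]
      rw [ContinuousLinearMap.star_eq_adjoint, ContinuousLinearMap.star_eq_adjoint,
        ContinuousLinearMap.adjoint_inner_left, ContinuousLinearMap.adjoint_inner_left]
    rw [hSx]
    calc ‖(inner ℂ (X (B x)) (A x) : ℂ) + (inner ℂ (X (A x)) (B x) : ℂ)‖
        ≤ 2 * numRad X * (‖B x‖ * ‖A x‖) := two_point' X (B x) (A x)
      _ = numRad X * (2 * (‖A x‖ * ‖B x‖)) := by ring
      _ ≤ numRad X * (‖A‖ * ‖B‖ + ‖A * star B‖) := by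
          have := key_norms A B x hx
          exact mul_le_mul_of_nonneg_left this (numRad_nonneg X)
      _ ≤ numRad X * K := by
          apply mul_le_mul_of_nonneg_left _ (numRad_nonneg X)
          rw [hK]
          nlinarith [sq_nonneg (‖A‖ - ‖B‖)]
      _ = K * numRad X := by ring
  · exact mul_nonneg hK0 (numRad_nonneg X)
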